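/- arXiv:1603.05321 — 3 statements merged into one kernel-verified Lean document; each statement's English description precedes it below -/
import Mathlib

section
/- Let Φ be a frame for H and m a sequence of nonzero scalars such that mΦ is a frame whose canonical dual satisfies S_{mΦ}^{-1}(m_n φ_n) = (1/m̄_n) S_Φ^{-1}(φ_n) for all n. Let Ψ be any frame for H. Then M_{m,Φ,Ψ} is invertible with M_{m,Φ,Ψ}^{-1} = M_{1/m, Ψ̃, Φ̃} if and only if Ψ is equivalent to mΦ. -/
open scoped ComplexConjugate ComplexInnerProductSpace

variable {H : Type*} [NormedAddCommGroup H] [InnerProductSpace ℂ H] [CompleteSpace H]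

/-- `Φ` is a Bessel sequence in `H`. -/
def IsBessel (Φ : ℕ → H) : Prop :=
  ∃ B : ℝ, 0 < B ∧ ∀ f : H, Summable (fun n => ‖⟪Φ n, f⟫‖ ^ 2) ∧
    ∑' n, ‖⟪Φ n, f⟫‖ ^ 2 ≤ B * ‖f‖ ^ 2

/-- `Φ` is a frame for `H`. -/
def IsFrame (Φ : ℕ → H) : Prop :=
  ∃ A B : ℝ, 0 < A ∧ 0 < B ∧ ∀ f : H, Summable (fun n => ‖⟪Φ n, f⟫‖ ^ 2) ∧
    A * ‖f‖ ^ 2 ≤ ∑' n, ‖⟪Φ n, f⟫‖ ^ 2 ∧ ∑' n, ‖⟪Φ n, f⟫‖ ^ 2 ≤ B * ‖f‖ ^ 2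

/-- `F` is a dual frame of the frame `Φ`:
`f = Σ ⟨f, Φ n⟩ F n = Σ ⟨f, F n⟩ Φ n` for all `f` (paper convention `⟨f, x⟩ = ⟪x, f⟫`). -/
def IsDualFrame (Φ F : ℕ → H) : Prop :=
  IsFrame F ∧ ∀ f : H, HasSum (fun n => ⟪Φ n, f⟫ • F n) f ∧ HasSum (fun n => ⟪F n, f⟫ • Φ n) f

/-- `F` is an analysis pseudo-dual of `Φ`: `f = Σ ⟨f, F n⟩ Φ n` for all `f`. -/
def IsAPseudoDual (Φ F : ℕ → H) : Prop := ∀ f : H, HasSum (fun n => ⟪F n, f⟫ • Φ n) f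

/-- `F` is a synthesis pseudo-dual of `Φ`: `f = Σ ⟨f, Φ n⟩ F n` for all `f`. -/
def IsSPseudoDual (Φ F : ℕ → H) : Prop := ∀ f : H, HasSum (fun n => ⟪Φ n, f⟫ • F n) f

/-- The frame operator `S_Φ f = Σ ⟨f, Φ n⟩ Φ n`. -/
noncomputable def frameOp (Φ : ℕ → H) (f : H) : H := ∑' n, ⟪Φ n, f⟫ • Φ n

/-- `m` is semi-normalized: `0 < a ≤ ‖m n‖ ≤ b < ∞`. -/
def SemiNormalized (m : ℕ → ℂ) : Prop := ∃ a b : ℝ, 0 < a ∧ ∀ n, a ≤ ‖m n‖ ∧ ‖m n‖ ≤ b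

open scoped ENNReal

set_option maxHeartbeats 1000000

private lemma bij_of_coercive (S : H →L[ℂ] H) (A : ℝ) (hA : 0 < A)
    (hlow : ∀ f : H, A * ‖f‖ ^ 2 ≤ RCLike.re ⟪f, S f⟫) : Function.Bijective S := by
  have hAf : ∀ f : H, A * ‖f‖ ≤ ‖S f‖ := by
    intro f
    rcases eq_or_ne f 0 with rfl | hf
    · simp
    · have hfp : 0 < ‖f‖ := norm_pos_iff.mpr hf
      have key : A * ‖f‖ ^ 2 ≤ ‖f‖ * ‖S f‖ :=
        le_trans (hlow f) (re_inner_le_norm _ _)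
      nlinarith
  have hanti : AntilipschitzWith ⟨A⁻¹, by positivity⟩ S := by
    apply AddMonoidHomClass.antilipschitz_of_bound
    intro f
    show ‖f‖ ≤ A⁻¹ * ‖S f‖
    calc ‖f‖ = A⁻¹ * (A * ‖f‖) := by field_simp
      _ ≤ A⁻¹ * ‖S f‖ := mul_le_mul_of_nonneg_left (hAf f) (inv_nonneg.mpr hA.le)
  have hinj : Function.Injective S := hanti.injective
  have hKc : IsClosed ((LinearMap.range (S : H →ₗ[ℂ] H) : Submodule ℂ H) : Set H) := by
    have h1 : ((LinearMap.range (S : H →ₗ[ℂ] H) : Submodule ℂ H) : Set H) = Set.range S :=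
      LinearMap.coe_range _
    rw [h1]
    exact hanti.isClosed_range S.uniformContinuous
  haveI : CompleteSpace (LinearMap.range (S : H →ₗ[ℂ] H) : Submodule ℂ H) := hKc.completeSpace_coe
  have horth : (LinearMap.range (S : H →ₗ[ℂ] H) : Submodule ℂ H)ᗮ = ⊥ := by
    rw [Submodule.eq_bot_iff]
    intro g hg
    have h0 : ⟪S g, g⟫ = 0 :=
      (Submodule.mem_orthogonal _ g).mp hg (S g) (LinearMap.mem_range_self _ g)
    have h1 : RCLike.re ⟪g, S g⟫ = 0 := by
      rw [← inner_conj_symm, h0]; simp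
    have h2 : A * ‖g‖ ^ 2 ≤ 0 := le_trans (hlow g) (le_of_eq h1)
    have h3 : ‖g‖ ^ 2 ≤ 0 := le_of_mul_le_mul_left (by simpa using h2) hA
    have h4 : ‖g‖ ^ 2 = 0 := le_antisymm h3 (by positivity)
    have : ‖g‖ = 0 := by
      have := pow_eq_zero_iff (n := 2) (by norm_num) |>.mp h4
      exact this
    exact norm_eq_zero.mp this
  have hsurj : LinearMap.range (S : H →ₗ[ℂ] H) = ⊤ := Submodule.orthogonal_eq_bot_iff.mp horth
  exact ⟨hinj, LinearMap.range_eq_top.mp hsurj⟩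

open ContinuousLinearMap in
private lemma frame_anOp (F : ℕ → H) (hF : IsFrame F) :
    ∃ U : H →L[ℂ] lp (fun _ : ℕ => ℂ) 2,
      (∀ f n, U f n = ⟪F n, f⟫) ∧ Function.Bijective ((adjoint U).comp U) := by
  obtain ⟨A, B, hA, hB, h⟩ := hF
  have h2 : (0:ℝ) < (2 : ℝ≥0∞).toReal := by simp
  have h2' : ((2 : ℝ≥0∞)).toReal = ((2:ℕ):ℝ) := by simp
  have hmem : ∀ f : H, Memℓp (fun n => ⟪F n, f⟫) 2 := by
    intro f
    apply memℓp_gen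
    have : (fun n => ‖⟪F n, f⟫‖ ^ ((2:ℝ≥0∞)).toReal) = fun n => ‖⟪F n, f⟫‖ ^ 2 := by
      funext n; rw [h2', Real.rpow_natCast]
    rw [this]
    exact (h f).1
  set U₀ : H →ₗ[ℂ] lp (fun _ : ℕ => ℂ) 2 :=
    { toFun := fun f => ⟨fun n => ⟪F n, f⟫, hmem f⟩
      map_add' := by intro x y; apply lp.ext; funext n; exact inner_add_right _ _ _
      map_smul' := by intro c x; apply lp.ext; funext n; exact inner_smul_right _ _ _ } with hU₀
  have hnorm_sq : ∀ f : H, ‖U₀ f‖ ^ 2 = ∑' n, ‖⟪F n, f⟫‖ ^ 2 := by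
    intro f
    have := lp.norm_rpow_eq_tsum h2 (U₀ f)
    rw [h2', Real.rpow_natCast] at this
    rw [this]
    congr 1
    funext n
    rw [Real.rpow_natCast]
    rfl
  have hbound : ∀ f : H, ‖U₀ f‖ ≤ Real.sqrt B * ‖f‖ := by
    intro f
    have h1 : ‖U₀ f‖ ^ 2 ≤ B * ‖f‖ ^ 2 := by rw [hnorm_sq f]; exact (h f).2.2
    have := Real.sqrt_le_sqrt h1
    rwa [Real.sqrt_sq (norm_nonneg _), Real.sqrt_mul hB.le, Real.sqrt_sq (norm_nonneg _)] at this
  set U : H →L[ℂ] lp (fun _ : ℕ => ℂ) 2 := U₀.mkContinuous (Real.sqrt B) hbound with hUdef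
  have hcoord : ∀ (f : H) (n : ℕ), U f n = ⟪F n, f⟫ := fun f n => rfl
  refine ⟨U, hcoord, ?_⟩
  apply bij_of_coercive _ A hA
  intro f
  have h1 : ⟪f, (adjoint U).comp U f⟫ = ⟪U f, U f⟫ := adjoint_inner_right U f (U f)
  rw [h1, inner_self_eq_norm_sq]
  show A * ‖f‖ ^ 2 ≤ ‖U₀ f‖ ^ 2
  rw [hnorm_sq f]
  exact (h f).2.1

open ContinuousLinearMap in
private lemma adjoint_single (F : ℕ → H) (U : H →L[ℂ] lp (fun _ : ℕ => ℂ) 2)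
    (hU : ∀ f n, U f n = ⟪F n, f⟫) (n : ℕ) (c : ℂ) :
    adjoint U (lp.single 2 n c) = c • F n := by
  apply ext_inner_right ℂ
  intro g
  rw [adjoint_inner_left, lp.inner_single_left, hU]
  simp [inner_smul_left, RCLike.inner_apply, mul_comm]

open ContinuousLinearMap in
private lemma hasSum_adjoint (F : ℕ → H) (U : H →L[ℂ] lp (fun _ : ℕ => ℂ) 2)
    (hU : ∀ f n, U f n = ⟪F n, f⟫) (y : lp (fun _ : ℕ => ℂ) 2) :
    HasSum (fun n => y n • F n) (adjoint U y) := by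
  have h := (lp.hasSum_single ENNReal.ofNat_ne_top y).mapL (adjoint U)
  simpa [adjoint_single F U hU] using h

theorem stmt13 (Φ Ψ : ℕ → H) (m : ℕ → ℂ) (hΦ : IsFrame Φ) (hΨ : IsFrame Ψ)
    (hm : ∀ n, m n ≠ 0) (hmΦ : IsFrame (fun n => m n • Φ n))
    (Φt Ψt mΦt : ℕ → H)
    (hΦt : ∀ n, frameOp Φ (Φt n) = Φ n) (hΨt : ∀ n, frameOp Ψ (Ψt n) = Ψ n)
    (hmΦt : ∀ n, frameOp (fun k => m k • Φ k) (mΦt n) = m n • Φ n)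
    (hcan : ∀ n, mΦt n = ((starRingEnd ℂ) (m n))⁻¹ • Φt n) :
    (∃ M N : H →L[ℂ] H,
      (∀ f : H, HasSum (fun n => (m n * ⟪Ψ n, f⟫) • Φ n) (M f)) ∧
      (∀ f : H, N (M f) = f) ∧ (∀ f : H, M (N f) = f) ∧
      (∀ f : H, HasSum (fun n => ((m n)⁻¹ * ⟪Φt n, f⟫) • Ψt n) (N f)))
    ↔ (∃ V : H →L[ℂ] H, Function.Bijective V ∧ ∀ n, V (m n • Φ n) = Ψ n) := by
  classical
  obtain ⟨U, hU, hSbij⟩ := frame_anOp (fun n => m n • Φ n) hmΦ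
  obtain ⟨W, hW, hSΨbij⟩ := frame_anOp Ψ hΨ
  simp only [] at hU
  set S : H →L[ℂ] H := (ContinuousLinearMap.adjoint U).comp U with hSdef
  set SΨ : H →L[ℂ] H := (ContinuousLinearMap.adjoint W).comp W with hSΨdef
  -- invertibility of the frame operators
  set Se : H ≃L[ℂ] H := ContinuousLinearEquiv.ofBijective S
    (LinearMap.ker_eq_bot.mpr hSbij.1) (LinearMap.range_eq_top.mpr hSbij.2) with hSedef
  set SΨe : H ≃L[ℂ] H := ContinuousLinearEquiv.ofBijective SΨ
    (LinearMap.ker_eq_bot.mpr hSΨbij.1) (LinearMap.range_eq_top.mpr hSΨbij.2) with hSΨedef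
  set Sinv : H →L[ℂ] H := (Se.symm : H →L[ℂ] H) with hSinvdef
  set SΨinv : H →L[ℂ] H := (SΨe.symm : H →L[ℂ] H) with hSΨinvdef
  have hSe : ∀ x : H, Se x = S x := fun x => rfl
  have hSΨe : ∀ x : H, SΨe x = SΨ x := fun x => rfl
  have hSinvS : ∀ f : H, Sinv (S f) = f := by
    intro f; rw [hSinvdef, ContinuousLinearEquiv.coe_coe, ← hSe]; exact Se.symm_apply_apply f
  have hSSinv : ∀ f : H, S (Sinv f) = f := by
    intro f; rw [hSinvdef, ContinuousLinearEquiv.coe_coe, ← hSe]; exact Se.apply_symm_apply f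
  have hSΨinvS : ∀ f : H, SΨinv (SΨ f) = f := by
    intro f; rw [hSΨinvdef, ContinuousLinearEquiv.coe_coe, ← hSΨe]; exact SΨe.symm_apply_apply f
  have hSΨSinv : ∀ f : H, SΨ (SΨinv f) = f := by
    intro f; rw [hSΨinvdef, ContinuousLinearEquiv.coe_coe, ← hSΨe]; exact SΨe.apply_symm_apply f
  -- self-adjointness
  have hSapp : ∀ a : H, S a = ContinuousLinearMap.adjoint U (U a) := by
    intro a; rw [hSdef]; rfl
  have hSΨapp : ∀ a : H, SΨ a = ContinuousLinearMap.adjoint W (W a) := by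
    intro a; rw [hSΨdef]; rfl
  have hSsa : ∀ x y : H, ⟪S x, y⟫ = ⟪x, S y⟫ := by
    intro x y
    rw [hSapp, hSapp, ContinuousLinearMap.adjoint_inner_left,
      ContinuousLinearMap.adjoint_inner_right]
  have hSinvsa : ∀ x y : H, ⟪Sinv x, y⟫ = ⟪x, Sinv y⟫ := by
    intro x y
    calc ⟪Sinv x, y⟫ = ⟪Sinv x, S (Sinv y)⟫ := by rw [hSSinv]
      _ = ⟪S (Sinv x), Sinv y⟫ := (hSsa _ _).symm
      _ = ⟪x, Sinv y⟫ := by rw [hSSinv]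
  -- frame operator identification
  have hframeS : ∀ g : H, frameOp (fun k => m k • Φ k) g = S g := by
    intro g
    have h := hasSum_adjoint (fun k => m k • Φ k) U hU (U g)
    have h2 : (fun n => (U g : ℕ → ℂ) n • (m n • Φ n)) =
        fun n => ⟪m n • Φ n, g⟫ • (m n • Φ n) := by
      funext n; rw [hU]
    rw [h2] at h
    exact h.tsum_eq
  have hframeSΨ : ∀ g : H, frameOp Ψ g = SΨ g := by
    intro g
    have h := hasSum_adjoint Ψ W hW (W g)
    have h2 : (fun n => (W g : ℕ → ℂ) n • Ψ n) = fun n => ⟪Ψ n, g⟫ • Ψ n := by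
      funext n; rw [hW]
    rw [h2] at h
    exact h.tsum_eq
  -- dual identification
  have hFt : ∀ n, mΦt n = Sinv (m n • Φ n) := by
    intro n
    apply hSbij.1
    have h1 := hmΦt n
    rw [hframeS] at h1
    rw [h1, hSSinv]
  have hΨtid : ∀ n, Ψt n = SΨinv (Ψ n) := by
    intro n
    apply hSΨbij.1
    have h1 := hΨt n
    rw [hframeSΨ] at h1
    rw [h1, hSΨSinv]
  -- coefficient identification
  have hcoeff : ∀ (n : ℕ) (f : H), (m n)⁻¹ * ⟪Φt n, f⟫ = (U (Sinv f) : ℕ → ℂ) n := by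
    intro n f
    have h1 : Φt n = (starRingEnd ℂ) (m n) • mΦt n := by
      rw [hcan n, smul_smul]
      rw [mul_inv_cancel₀ (by simpa using hm n), one_smul]
    rw [hU, h1, inner_smul_left, Complex.conj_conj, hFt n, hSinvsa]
    rw [← mul_assoc, inv_mul_cancel₀ (hm n), one_mul]
  -- the two canonical multiplier operators
  set M₀ : H →L[ℂ] H := (ContinuousLinearMap.adjoint U).comp W with hM₀def
  set N₀ : H →L[ℂ] H := SΨinv.comp ((ContinuousLinearMap.adjoint W).comp (U.comp Sinv))
    with hN₀def
  have hM₀sum : ∀ f : H, HasSum (fun n => (m n * ⟪Ψ n, f⟫) • Φ n) (M₀ f) := by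
    intro f
    have h := hasSum_adjoint (fun k => m k • Φ k) U hU (W f)
    have h2 : (fun n => (W f : ℕ → ℂ) n • (m n • Φ n)) =
        fun n => (m n * ⟪Ψ n, f⟫) • Φ n := by
      funext n; rw [hW, smul_smul, mul_comm]
    rw [h2] at h
    exact h
  have hN₀sum : ∀ f : H, HasSum (fun n => ((m n)⁻¹ * ⟪Φt n, f⟫) • Ψt n) (N₀ f) := by
    intro f
    have h := (hasSum_adjoint Ψ W hW (U (Sinv f))).mapL SΨinv
    have h2 : (fun n => SΨinv ((U (Sinv f) : ℕ → ℂ) n • Ψ n)) =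
        fun n => ((m n)⁻¹ * ⟪Φt n, f⟫) • Ψt n := by
      funext n
      rw [map_smul, ← hΨtid n, ← hcoeff n f]
    rw [h2] at h
    exact h
  constructor
  · -- forward direction
    rintro ⟨M, N, hM, hNM, hMN, hN⟩
    have hMM₀ : ∀ f : H, M f = M₀ f := fun f => (hM f).unique (hM₀sum f)
    have hNN₀ : ∀ f : H, N f = N₀ f := fun f => (hN f).unique (hN₀sum f)
    have hNM₀ : ∀ f : H, N₀ (M₀ f) = f := by
      intro f
      have h := hNM f
      rw [hMM₀ f, hNN₀ (M₀ f)] at h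
      exact h
    have hMN₀ : ∀ f : H, M₀ (N₀ f) = f := by
      intro f
      have h := hMN f
      rw [hNN₀ f, hMM₀ (N₀ f)] at h
      exact h
    have hcomp1 : N₀.comp M₀ = ContinuousLinearMap.id ℂ H := ContinuousLinearMap.ext hNM₀
    have hcomp2 : M₀.comp N₀ = ContinuousLinearMap.id ℂ H := ContinuousLinearMap.ext hMN₀
    have hadj1 : (ContinuousLinearMap.adjoint M₀).comp (ContinuousLinearMap.adjoint N₀) =
        ContinuousLinearMap.id ℂ H := by
      rw [← ContinuousLinearMap.adjoint_comp, hcomp1, ContinuousLinearMap.adjoint_id]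
    have hadj2 : (ContinuousLinearMap.adjoint N₀).comp (ContinuousLinearMap.adjoint M₀) =
        ContinuousLinearMap.id ℂ H := by
      rw [← ContinuousLinearMap.adjoint_comp, hcomp2, ContinuousLinearMap.adjoint_id]
    -- the equivalence operator
    set Vc : H →L[ℂ] H := (ContinuousLinearMap.adjoint W).comp (U.comp Sinv) with hVcdef
    set Vinv : H →L[ℂ] H := S.comp (ContinuousLinearMap.adjoint N₀) with hVinvdef
    -- adjoint of M₀
    have hadjM₀ : ∀ x : H, ContinuousLinearMap.adjoint M₀ x =
        ContinuousLinearMap.adjoint W (U x) := by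
      intro x
      rw [hM₀def, ContinuousLinearMap.adjoint_comp, ContinuousLinearMap.adjoint_adjoint]
      rfl
    have hleft : ∀ x : H, Vinv (Vc x) = x := by
      intro x
      rw [hVinvdef, hVcdef]
      simp only [ContinuousLinearMap.comp_apply]
      rw [← hadjM₀]
      have h := congrArg (fun (T : H →L[ℂ] H) => T (Sinv x)) hadj2
      simp only [ContinuousLinearMap.comp_apply, ContinuousLinearMap.id_apply] at h
      rw [h, hSSinv]
    have hright : ∀ x : H, Vc (Vinv x) = x := by
      intro x
      rw [hVinvdef, hVcdef]
      simp only [ContinuousLinearMap.comp_apply]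
      rw [hSinvS, ← hadjM₀]
      have h := congrArg (fun (T : H →L[ℂ] H) => T x) hadj1
      simp only [ContinuousLinearMap.comp_apply, ContinuousLinearMap.id_apply] at h
      exact h
    refine ⟨Vc, ⟨Function.LeftInverse.injective hleft, Function.RightInverse.surjective hright⟩,
      ?_⟩
    intro n
    -- key projection argument
    set P : lp (fun _ : ℕ => ℂ) 2 →L[ℂ] lp (fun _ : ℕ => ℂ) 2 :=
      U.comp (Sinv.comp (ContinuousLinearMap.adjoint U)) with hPdef
    have hPapp : ∀ z, P z = U (Sinv (ContinuousLinearMap.adjoint U z)) := by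
      intro z; rw [hPdef]; simp only [ContinuousLinearMap.comp_apply]
    have hPsa : ∀ z x' : lp (fun _ : ℕ => ℂ) 2, ⟪P z, x'⟫ = ⟪z, P x'⟫ := by
      intro z x'
      rw [hPapp, hPapp, ← ContinuousLinearMap.adjoint_inner_right U, hSinvsa,
        ContinuousLinearMap.adjoint_inner_left]
    have hPP : ∀ z, P (P z) = P z := by
      intro z
      rw [hPapp, hPapp]
      have h1 : ContinuousLinearMap.adjoint U (U (Sinv (ContinuousLinearMap.adjoint U z))) =
          S (Sinv (ContinuousLinearMap.adjoint U z)) := (hSapp _).symm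
      rw [h1, hSSinv]
    have hkey : ∀ g : H, ContinuousLinearMap.adjoint W (P (W g)) =
        ContinuousLinearMap.adjoint W (W g) := by
      intro g
      have h2 := congrArg SΨ (hNM₀ g)
      have h3 : SΨ (N₀ (M₀ g)) = ContinuousLinearMap.adjoint W (P (W g)) := by
        rw [hPapp, hN₀def, hVcdef, hM₀def]
        simp only [ContinuousLinearMap.comp_apply]
        rw [hSΨSinv]
      rw [h3, hSΨapp g] at h2
      exact h2
    have hPW : ∀ g : H, P (W g) = W g := by
      intro g
      have a1 : ⟪W g, W g - P (W g)⟫ = 0 := by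
        rw [← ContinuousLinearMap.adjoint_inner_right W, map_sub, hkey g, sub_self,
          inner_zero_right]
      have a2 : ⟪P (W g), W g - P (W g)⟫ = 0 := by
        rw [hPsa, map_sub, hPP, sub_self, inner_zero_right]
      have e1 : ⟪W g - P (W g), W g - P (W g)⟫ = 0 := by
        rw [inner_sub_left, a1, a2, sub_zero]
      have e2 : W g - P (W g) = 0 := inner_self_eq_zero.mp e1
      exact (sub_eq_zero.mp e2).symm
    set y : lp (fun _ : ℕ => ℂ) 2 := U (Sinv (m n • Φ n)) with hydef
    have hadjUx : ContinuousLinearMap.adjoint U (y - lp.single 2 n 1) = 0 := by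
      rw [map_sub]
      have h5 : ContinuousLinearMap.adjoint U (lp.single 2 n 1) = m n • Φ n := by
        rw [adjoint_single (fun k => m k • Φ k) U hU n 1, one_smul]
      have h6 : ContinuousLinearMap.adjoint U y = m n • Φ n := by
        rw [hydef, ← hSapp, hSSinv]
      rw [h5, h6, sub_self]
    have hPx : P (y - lp.single 2 n 1) = 0 := by
      rw [hPapp, hadjUx, map_zero, map_zero]
    have hWx : ∀ g : H, ⟪W g, y - lp.single 2 n 1⟫ = 0 := by
      intro g
      rw [← hPW g, hPsa, hPx, inner_zero_right]
    have hadjWx : ContinuousLinearMap.adjoint W (y - lp.single 2 n 1) = 0 := by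
      have h6 : ⟪ContinuousLinearMap.adjoint W (y - lp.single 2 n 1),
          ContinuousLinearMap.adjoint W (y - lp.single 2 n 1)⟫ = 0 := by
        rw [ContinuousLinearMap.adjoint_inner_right]
        exact hWx _
      exact inner_self_eq_zero.mp h6
    have hgoal : Vc (m n • Φ n) = Ψ n := by
      rw [hVcdef]
      simp only [ContinuousLinearMap.comp_apply]
      have h7 : U (Sinv (m n • Φ n)) = (y - lp.single 2 n 1) + lp.single 2 n 1 := by
        rw [sub_add_cancel, hydef]
      rw [h7, map_add, hadjWx, zero_add, adjoint_single Ψ W hW n 1, one_smul]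
    exact hgoal
  · -- backward direction
    rintro ⟨V, hVb, hV⟩
    have hWV : ∀ f : H, W f = U (ContinuousLinearMap.adjoint V f) := by
      intro f
      apply lp.ext
      funext k
      rw [hW, hU, ContinuousLinearMap.adjoint_inner_right, hV]
    have hWcomp : W = U.comp (ContinuousLinearMap.adjoint V) := ContinuousLinearMap.ext hWV
    have hadjW : ContinuousLinearMap.adjoint W =
        V.comp (ContinuousLinearMap.adjoint U) := by
      rw [hWcomp, ContinuousLinearMap.adjoint_comp, ContinuousLinearMap.adjoint_adjoint]
    refine ⟨M₀, N₀, hM₀sum, ?_, ?_, hN₀sum⟩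
    · intro f
      apply hSΨbij.1
      have e1 : SΨ (N₀ (M₀ f)) = ContinuousLinearMap.adjoint W (U (Sinv (M₀ f))) := by
        rw [hN₀def]
        simp only [ContinuousLinearMap.comp_apply]
        rw [hSΨSinv]
      have e2 : M₀ f = S (ContinuousLinearMap.adjoint V f) := by
        rw [hM₀def]
        simp only [ContinuousLinearMap.comp_apply]
        rw [hWV, ← hSapp]
      rw [e1, e2, hSinvS, ← hWV, ← hSΨapp]
    · intro f
      have hz : SΨ (N₀ f) = ContinuousLinearMap.adjoint W (U (Sinv f)) := by
        rw [hN₀def]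
        simp only [ContinuousLinearMap.comp_apply]
        rw [hSΨSinv]
      have h2 : SΨ (N₀ f) = V (S (ContinuousLinearMap.adjoint V (N₀ f))) := by
        rw [hSΨapp, hadjW, hWV]
        simp only [ContinuousLinearMap.comp_apply]
        rw [← hSapp]
      have h3 : ContinuousLinearMap.adjoint W (U (Sinv f)) = V f := by
        rw [hadjW]
        simp only [ContinuousLinearMap.comp_apply]
        rw [← hSapp, hSSinv]
      have h4 : V (S (ContinuousLinearMap.adjoint V (N₀ f))) = V f := by
        rw [← h2, hz, h3]
      have h5 : S (ContinuousLinearMap.adjoint V (N₀ f)) = f := hVb.1 h4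
      have h6 : M₀ (N₀ f) = S (ContinuousLinearMap.adjoint V (N₀ f)) := by
        rw [hM₀def]
        simp only [ContinuousLinearMap.comp_apply]
        rw [hWV, ← hSapp]
      rw [h6, h5]
end

section
/- Let Φ and Ψ be frames for H and m a symbol with constant modulus |m_n| = c ≠ 0 for all n. Then the following are equivalent: (i) M_{m,Φ,Ψ} is invertible and M_{m,Φ,Ψ}^{-1} = M_{1/m, Ψ̃, Φ̃}; (ii) Ψ is equivalent to mΦ; (iii) Φ is equivalent to m̄Ψ. -/
set_option linter.unusedSectionVars false
set_option maxHeartbeats 1600000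

open scoped ComplexConjugate ComplexInnerProductSpace

variable {H : Type*} [NormedAddCommGroup H] [InnerProductSpace ℂ H] [CompleteSpace H]

private lemma hasSum_congr' {α : Type*} [AddCommMonoid α] [TopologicalSpace α]
    {f g : ℕ → α} {a : α} (h : HasSum f a) (he : ∀ n, f n = g n) : HasSum g a :=
  (funext he : f = g) ▸ h

private lemma sq_div_trick {x T S : ℝ} (hS : 0 ≤ S) (h1 : x^2 ≤ T) (h2 : T^2 ≤ S * x^2) :
    x^2 ≤ S := by
  rcases eq_or_lt_of_le (sq_nonneg x) with h | h
  · rw [← h]; exact hS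
  · have h4 : x^2 * x^2 ≤ S * x^2 := by nlinarith
    exact le_of_mul_le_mul_right h4 h

private lemma bessel_finset_bound {Φ : ℕ → H} {B : ℝ} (hB : 0 ≤ B)
    (hbes : ∀ f : H, Summable (fun n => ‖⟪Φ n, f⟫‖ ^ 2) ∧ ∑' n, ‖⟪Φ n, f⟫‖ ^ 2 ≤ B * ‖f‖ ^ 2)
    (a : ℕ → ℂ) (s : Finset ℕ) :
    ‖∑ n ∈ s, a n • Φ n‖ ^ 2 ≤ B * ∑ n ∈ s, ‖a n‖ ^ 2 := by
  set f := ∑ n ∈ s, a n • Φ n with hf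
  have hsum : ∑ n ∈ s, ‖⟪Φ n, f⟫‖ ^ 2 ≤ B * ‖f‖ ^ 2 := by
    refine le_trans (Summable.sum_le_tsum s (fun i _ => by positivity) (hbes f).1) (hbes f).2
  have h1 : ‖f‖ ^ 2 ≤ ∑ n ∈ s, ‖a n‖ * ‖⟪Φ n, f⟫‖ := by
    have : (‖f‖:ℝ) ^ 2 = RCLike.re (⟪f, f⟫) := norm_sq_eq_re_inner (𝕜 := ℂ) f
    rw [this]
    have hff : ⟪f, f⟫ = ∑ n ∈ s, (starRingEnd ℂ) (a n) * ⟪Φ n, f⟫ := by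
      rw [hf, sum_inner]
      exact Finset.sum_congr rfl fun n _ => inner_smul_left _ _ _
    rw [hff]
    calc RCLike.re (∑ n ∈ s, (starRingEnd ℂ) (a n) * ⟪Φ n, f⟫)
        ≤ ‖∑ n ∈ s, (starRingEnd ℂ) (a n) * ⟪Φ n, f⟫‖ := RCLike.re_le_norm _
      _ ≤ ∑ n ∈ s, ‖(starRingEnd ℂ) (a n) * ⟪Φ n, f⟫‖ := norm_sum_le _ _
      _ = ∑ n ∈ s, ‖a n‖ * ‖⟪Φ n, f⟫‖ := by
          refine Finset.sum_congr rfl fun n _ => ?_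
          rw [norm_mul, RCLike.norm_conj]
  have h2 : (∑ n ∈ s, ‖a n‖ * ‖⟪Φ n, f⟫‖) ^ 2 ≤ (B * ∑ n ∈ s, ‖a n‖ ^ 2) * ‖f‖ ^ 2 := by
    calc (∑ n ∈ s, ‖a n‖ * ‖⟪Φ n, f⟫‖) ^ 2
        ≤ (∑ n ∈ s, ‖a n‖ ^ 2) * ∑ n ∈ s, ‖⟪Φ n, f⟫‖ ^ 2 :=
          Finset.sum_mul_sq_le_sq_mul_sq _ _ _
      _ ≤ (∑ n ∈ s, ‖a n‖ ^ 2) * (B * ‖f‖ ^ 2) := by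
          refine mul_le_mul_of_nonneg_left hsum (by positivity)
      _ = (B * ∑ n ∈ s, ‖a n‖ ^ 2) * ‖f‖ ^ 2 := by ring
  exact sq_div_trick (by positivity) h1 h2

private lemma bessel_summable {Φ : ℕ → H} {B : ℝ} (hB : 0 ≤ B)
    (hbes : ∀ f : H, Summable (fun n => ‖⟪Φ n, f⟫‖ ^ 2) ∧ ∑' n, ‖⟪Φ n, f⟫‖ ^ 2 ≤ B * ‖f‖ ^ 2)
    {a : ℕ → ℂ} (ha : Summable (fun n => ‖a n‖ ^ 2)) :
    Summable (fun n => a n • Φ n) := by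
  rw [summable_iff_vanishing_norm]
  intro ε hε
  have hε' : 0 < ε ^ 2 / (B + 1) := by positivity
  obtain ⟨s, hs⟩ := summable_iff_vanishing_norm.1 ha _ hε'
  refine ⟨s, fun t ht => ?_⟩
  have h1 : ‖∑ n ∈ t, a n • Φ n‖ ^ 2 ≤ B * ∑ n ∈ t, ‖a n‖ ^ 2 :=
    bessel_finset_bound hB hbes a t
  have h2 : ∑ n ∈ t, ‖a n‖ ^ 2 < ε ^ 2 / (B + 1) := by
    have := hs t ht
    calc ∑ n ∈ t, ‖a n‖ ^ 2 ≤ ‖∑ n ∈ t, ‖a n‖ ^ 2‖ := le_abs_self _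
      _ < ε ^ 2 / (B + 1) := this
  have h3 : ‖∑ n ∈ t, a n • Φ n‖ ^ 2 < ε ^ 2 := by
    have hBp : B * (ε ^ 2 / (B + 1)) ≤ ε ^2 / (B+1) * (B+1) := by
      rw [mul_comm]
      refine mul_le_mul_of_nonneg_left (by linarith) (by positivity)
    have hsnn : (0:ℝ) ≤ ∑ n ∈ t, ‖a n‖ ^ 2 := by positivity
    have : B * ∑ n ∈ t, ‖a n‖ ^ 2 < ε ^ 2 := by
      rcases eq_or_lt_of_le hB with hB0 | hB0
      · rw [← hB0]; simpa using pow_pos hε 2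
      · calc B * ∑ n ∈ t, ‖a n‖ ^ 2 < B * (ε ^ 2 / (B + 1)) :=
              (mul_lt_mul_iff_right₀ hB0).2 h2
          _ ≤ ε ^2 / (B+1) * (B+1) := hBp
          _ = ε ^ 2 := by field_simp
    linarith
  exact lt_of_pow_lt_pow_left₀ 2 (le_of_lt hε) h3

private lemma bessel_tsum_sq_le {Φ : ℕ → H} {B : ℝ} (hB : 0 ≤ B)
    (hbes : ∀ f : H, Summable (fun n => ‖⟪Φ n, f⟫‖ ^ 2) ∧ ∑' n, ‖⟪Φ n, f⟫‖ ^ 2 ≤ B * ‖f‖ ^ 2)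
    {a : ℕ → ℂ} (ha : Summable (fun n => ‖a n‖ ^ 2)) {x : H}
    (hx : HasSum (fun n => a n • Φ n) x) :
    ‖x‖ ^ 2 ≤ B * ∑' n, ‖a n‖ ^ 2 := by
  have hcont : Continuous (fun y : H => ‖y‖ ^ 2) := by continuity
  have htend := (hcont.tendsto x).comp hx
  refine le_of_tendsto htend (Filter.Eventually.of_forall fun s => ?_)
  calc ‖∑ n ∈ s, a n • Φ n‖ ^ 2 ≤ B * ∑ n ∈ s, ‖a n‖ ^ 2 := bessel_finset_bound hB hbes a s
    _ ≤ B * ∑' n, ‖a n‖ ^ 2 :=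
        mul_le_mul_of_nonneg_left (Summable.sum_le_tsum s (fun i _ => by positivity) ha) hB

private lemma frame_hasSum {Φ : ℕ → H} (hΦ : IsFrame Φ) (f : H) :
    HasSum (fun n => ⟪Φ n, f⟫ • Φ n) (frameOp Φ f) := by
  obtain ⟨A, B, hA, hB, hfr⟩ := id hΦ
  exact (bessel_summable hB.le (fun g => ⟨(hfr g).1, (hfr g).2.2⟩) (hfr f).1).hasSum

private lemma frame_inner_self {Φ : ℕ → H} (hΦ : IsFrame Φ) (f : H) :
    ⟪f, frameOp Φ f⟫ = ((∑' n, ‖⟪Φ n, f⟫‖ ^ 2 : ℝ) : ℂ) := by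
  obtain ⟨A, B, hA, hB, hfr⟩ := id hΦ
  have h1 : HasSum (fun n => ⟪f, ⟪Φ n, f⟫ • Φ n⟫) ⟪f, frameOp Φ f⟫ :=
    (frame_hasSum ⟨A, B, hA, hB, hfr⟩ f).mapL (innerSL ℂ f)
  have h2 : HasSum (fun n => ((‖⟪Φ n, f⟫‖ ^ 2 : ℝ) : ℂ)) ((∑' n, ‖⟪Φ n, f⟫‖ ^ 2 : ℝ) : ℂ) :=
    ((hfr f).1.hasSum).mapL Complex.ofRealCLM
  refine h1.unique ?_
  convert h2 using 2 with n
  rw [inner_smul_right, ← inner_conj_symm (Φ n) f, mul_comm, RCLike.mul_conj, RCLike.norm_conj]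
  norm_cast

private lemma frame_symmetric {Φ : ℕ → H} (hΦ : IsFrame Φ) (f g : H) :
    ⟪frameOp Φ f, g⟫ = ⟪f, frameOp Φ g⟫ := by
  have h1 : HasSum (fun n => ⟪g, ⟪Φ n, f⟫ • Φ n⟫) ⟪g, frameOp Φ f⟫ :=
    (frame_hasSum hΦ f).mapL (innerSL ℂ g)
  have h1' : HasSum (fun n => (starRingEnd ℂ) ⟪g, ⟪Φ n, f⟫ • Φ n⟫)
      ((starRingEnd ℂ) ⟪g, frameOp Φ f⟫) := h1.star
  rw [inner_conj_symm] at h1'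
  have h2 : HasSum (fun n => ⟪f, ⟪Φ n, g⟫ • Φ n⟫) ⟪f, frameOp Φ g⟫ :=
    (frame_hasSum hΦ g).mapL (innerSL ℂ f)
  refine h1'.unique ?_
  convert h2 using 2 with n
  rw [inner_smul_right, inner_smul_right, map_mul, inner_conj_symm, inner_conj_symm, mul_comm]

private lemma frame_lower {Φ : ℕ → H} {A : ℝ} (hA : 0 < A)
    (hlow : ∀ f : H, A * ‖f‖ ^ 2 ≤ ∑' n, ‖⟪Φ n, f⟫‖ ^ 2)
    (hΦ : IsFrame Φ) (f : H) : ‖f‖ ≤ A⁻¹ * ‖frameOp Φ f‖ := by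
  have h1 : A * ‖f‖ ^ 2 ≤ ‖f‖ * ‖frameOp Φ f‖ := by
    calc A * ‖f‖ ^ 2 ≤ ∑' n, ‖⟪Φ n, f⟫‖ ^ 2 := hlow f
      _ = RCLike.re ⟪f, frameOp Φ f⟫ := by rw [frame_inner_self hΦ f]; norm_cast
      _ ≤ ‖⟪f, frameOp Φ f⟫‖ := RCLike.re_le_norm _
      _ ≤ ‖f‖ * ‖frameOp Φ f‖ := norm_inner_le_norm _ _
  rcases eq_or_lt_of_le (norm_nonneg f) with h0 | h0
  · rw [← h0]; positivity
  · have h2 : A * ‖f‖ ≤ ‖frameOp Φ f‖ := by nlinarith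
    calc ‖f‖ = A⁻¹ * (A * ‖f‖) := by field_simp
      _ ≤ A⁻¹ * ‖frameOp Φ f‖ := mul_le_mul_of_nonneg_left h2 (by positivity)

/-- The frame operator as a continuous linear equivalence. -/
private lemma frame_equiv {Φ : ℕ → H} (hΦ : IsFrame Φ) :
    ∃ E : H ≃L[ℂ] H, (∀ f, E f = frameOp Φ f) ∧
      (∀ f g, ⟪E.symm f, g⟫ = ⟪f, E.symm g⟫) := by
  obtain ⟨A, B, hA, hB, hfr⟩ := id hΦ
  have hΦ' : IsFrame Φ := ⟨A, B, hA, hB, hfr⟩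
  have hmap : ∀ f g : H, frameOp Φ (f + g) = frameOp Φ f + frameOp Φ g := by
    intro f g
    refine HasSum.unique (frame_hasSum hΦ' (f + g)) ?_
    have := (frame_hasSum hΦ' f).add (frame_hasSum hΦ' g)
    convert this using 2 with n
    rw [inner_add_right, add_smul]
  have hsmul : ∀ (c : ℂ) (f : H), frameOp Φ (c • f) = c • frameOp Φ f := by
    intro c f
    refine HasSum.unique (frame_hasSum hΦ' (c • f)) ?_
    have := (frame_hasSum hΦ' f).const_smul c
    convert this using 2 with n
    rw [inner_smul_right, mul_smul]
  have hbound : ∀ f : H, ‖frameOp Φ f‖ ≤ B * ‖f‖ := by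
    intro f
    have h := bessel_tsum_sq_le hB.le (fun g => ⟨(hfr g).1, (hfr g).2.2⟩) (hfr f).1
      (frame_hasSum hΦ' f)
    have h2 : ‖frameOp Φ f‖ ^ 2 ≤ (B * ‖f‖) ^ 2 := by
      calc ‖frameOp Φ f‖ ^ 2 ≤ B * ∑' n, ‖⟪Φ n, f⟫‖ ^ 2 := h
        _ ≤ B * (B * ‖f‖ ^ 2) := mul_le_mul_of_nonneg_left (hfr f).2.2 hB.le
        _ = (B * ‖f‖) ^ 2 := by ring
    nlinarith [h2, norm_nonneg (frameOp Φ f), mul_nonneg hB.le (norm_nonneg f)]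
  let T : H →L[ℂ] H := LinearMap.mkContinuous
    { toFun := frameOp Φ, map_add' := hmap, map_smul' := hsmul } B hbound
  have hT : ∀ f, T f = frameOp Φ f := fun f => rfl
  have hanti : AntilipschitzWith (A⁻¹).toNNReal T := by
    refine ContinuousLinearMap.antilipschitz_of_bound T fun f => ?_
    rw [Real.coe_toNNReal _ (by positivity)]
    rw [hT]
    exact frame_lower hA (fun g => (hfr g).2.1) hΦ' f
  have hinj : LinearMap.ker (T : H →ₗ[ℂ] H) = ⊥ := (LinearMap.ker_eq_bot (f := (T : H →ₗ[ℂ] H))).2 hanti.injective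
  have hclosed : IsClosed (LinearMap.range (T : H →ₗ[ℂ] H) : Set H) := by
    have := hanti.isClosed_range T.uniformContinuous
    convert this using 1
    exact LinearMap.coe_range _
  have hsurj : LinearMap.range (T : H →ₗ[ℂ] H) = ⊤ := by
    haveI : CompleteSpace (LinearMap.range (T : H →ₗ[ℂ] H)) := hclosed.completeSpace_coe
    rw [← Submodule.orthogonal_eq_bot_iff]
    rw [Submodule.eq_bot_iff]
    intro g hg
    have hg0 : ⟪T g, g⟫ = 0 :=
      (Submodule.mem_orthogonal _ g).1 hg (T g) (LinearMap.mem_range_self _ g)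
    have hg1 : ⟪g, T g⟫ = 0 := by
      rw [← inner_conj_symm (T g) g] at hg0
      simpa using congrArg (starRingEnd ℂ) hg0
    have hg2 : ((∑' n, ‖⟪Φ n, g⟫‖ ^ 2 : ℝ) : ℂ) = 0 := by
      rw [← frame_inner_self hΦ' g, ← hT g, hg1]
    have hg3 : (∑' n, ‖⟪Φ n, g⟫‖ ^ 2 : ℝ) = 0 := by exact_mod_cast hg2
    have := (hfr g).2.1
    rw [hg3] at this
    have : ‖g‖ ^ 2 ≤ 0 := by nlinarith
    have : ‖g‖ = 0 := by nlinarith [sq_nonneg ‖g‖, norm_nonneg g]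
    exact norm_eq_zero.1 this
  refine ⟨ContinuousLinearEquiv.ofBijective T hinj hsurj, fun f => hT f, ?_⟩
  intro f g
  set E := ContinuousLinearEquiv.ofBijective T hinj hsurj with hE
  have hEap : ∀ x, E (E.symm x) = x := fun x => E.apply_symm_apply x
  have hsymT : ∀ u v : H, ⟪T u, v⟫ = ⟪u, T v⟫ := by
    intro u v; rw [hT, hT]; exact frame_symmetric hΦ' u v
  have hcoe : ∀ x, E x = T x := fun x => rfl
  calc ⟪E.symm f, g⟫ = ⟪E.symm f, T (E.symm g)⟫ := by
        rw [← hcoe (E.symm g), hEap]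
    _ = ⟪T (E.symm f), E.symm g⟫ := (hsymT _ _).symm
    _ = ⟪f, E.symm g⟫ := by rw [← hcoe (E.symm f), hEap]

theorem stmt15 (Φ Ψ : ℕ → H) (m : ℕ → ℂ) (hΦ : IsFrame Φ) (hΨ : IsFrame Ψ)
    (c : ℝ) (hc : c ≠ 0) (hmod : ∀ n, ‖m n‖ = c)
    (Φt Ψt : ℕ → H)
    (hΦt : ∀ n, frameOp Φ (Φt n) = Φ n) (hΨt : ∀ n, frameOp Ψ (Ψt n) = Ψ n) :
    ((∃ M N : H →L[ℂ] H,
        (∀ f : H, HasSum (fun n => (m n * ⟪Ψ n, f⟫) • Φ n) (M f)) ∧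
        (∀ f : H, N (M f) = f) ∧ (∀ f : H, M (N f) = f) ∧
        (∀ f : H, HasSum (fun n => ((m n)⁻¹ * ⟪Φt n, f⟫) • Ψt n) (N f)))
      ↔ (∃ V : H →L[ℂ] H, Function.Bijective V ∧ ∀ n, V (m n • Φ n) = Ψ n)) ∧
    ((∃ V : H →L[ℂ] H, Function.Bijective V ∧ ∀ n, V (m n • Φ n) = Ψ n)
      ↔ (∃ V : H →L[ℂ] H, Function.Bijective V ∧ ∀ n, V ((starRingEnd ℂ) (m n) • Ψ n) = Φ n)) := by
  -- basic facts about the symbol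
  have hc0 : 0 < c := lt_of_le_of_ne (by rw [← hmod 0]; exact norm_nonneg _) (Ne.symm hc)
  have hm0 : ∀ n, m n ≠ 0 := by
    intro n h
    have := hmod n
    rw [h, norm_zero] at this
    exact hc this.symm
  have hmc : ∀ n, m n * (starRingEnd ℂ) (m n) = ((c:ℂ))^2 := by
    intro n
    rw [RCLike.mul_conj, hmod n]
    norm_cast
  have hcC : ((c:ℂ))^2 ≠ 0 := pow_ne_zero 2 (Complex.ofReal_ne_zero.2 hc)
  have hminv : ∀ n, (m n)⁻¹ = (((c:ℂ))^2)⁻¹ * (starRingEnd ℂ) (m n) := by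
    intro n
    refine inv_eq_of_mul_eq_one_right ?_
    calc m n * ((((c:ℂ))^2)⁻¹ * (starRingEnd ℂ) (m n))
        = (((c:ℂ))^2)⁻¹ * (m n * (starRingEnd ℂ) (m n)) := by ring
      _ = 1 := by rw [hmc n]; exact inv_mul_cancel₀ hcC
  -- frame operator equivalences
  obtain ⟨EΦ, hEΦ, hEΦs⟩ := frame_equiv hΦ
  obtain ⟨EΨ, hEΨ, hEΨs⟩ := frame_equiv hΨ
  have hΦt' : ∀ n, Φt n = EΦ.symm (Φ n) := by
    intro n
    have : EΦ (Φt n) = Φ n := by rw [hEΦ]; exact hΦt n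
    rw [← this, ContinuousLinearEquiv.symm_apply_apply]
  have hΨt' : ∀ n, Ψt n = EΨ.symm (Ψ n) := by
    intro n
    have : EΨ (Ψt n) = Ψ n := by rw [hEΨ]; exact hΨt n
    rw [← this, ContinuousLinearEquiv.symm_apply_apply]
  have hΦtin : ∀ n (f : H), ⟪Φt n, f⟫ = ⟪Φ n, EΦ.symm f⟫ := by
    intro n f; rw [hΦt' n]; exact hEΦs (Φ n) f
  have hΨtin : ∀ n (f : H), ⟪Ψt n, f⟫ = ⟪Ψ n, EΨ.symm f⟫ := by
    intro n f; rw [hΨt' n]; exact hEΨs (Ψ n) f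
  -- reconstruction with the canonical dual of Ψ
  have hrecΨ : ∀ f : H, HasSum (fun n => ⟪Ψ n, f⟫ • Ψt n) f := by
    intro f
    have h1 := (frame_hasSum hΨ f).mapL ((EΨ.symm : H ≃L[ℂ] H) : H →L[ℂ] H)
    have h2 : ((EΨ.symm : H ≃L[ℂ] H) : H →L[ℂ] H) (frameOp Ψ f) = f := by
      rw [ContinuousLinearEquiv.coe_coe, ← hEΨ, ContinuousLinearEquiv.symm_apply_apply]
    rw [h2] at h1
    refine hasSum_congr' h1 fun n => ?_
    simp only [ContinuousLinearEquiv.coe_coe, map_smul]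
    rw [← hΨt' n]
  have hrecΦtt : ∀ f : H, HasSum (fun n => ⟪Φt n, f⟫ • Φt n) (EΦ.symm f) := by
    intro f
    have h1 := (frame_hasSum hΦ (EΦ.symm f)).mapL ((EΦ.symm : H ≃L[ℂ] H) : H →L[ℂ] H)
    have h2 : ((EΦ.symm : H ≃L[ℂ] H) : H →L[ℂ] H) (frameOp Φ (EΦ.symm f)) = EΦ.symm f := by
      rw [ContinuousLinearEquiv.coe_coe, ← hEΦ, ContinuousLinearEquiv.symm_apply_apply]
    rw [h2] at h1
    refine hasSum_congr' h1 fun n => ?_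
    simp only [ContinuousLinearEquiv.coe_coe, map_smul]
    rw [← hΦtin n f, ← hΦt' n]
  constructor
  · -- (i) ↔ (ii)
    constructor
    · -- (i) → (ii)
      rintro ⟨M, N, hM, hNM, hMN, hN⟩
      have hMNc : M ∘L N = ContinuousLinearMap.id ℂ H := by
        ext f; exact hMN f
      have hNMc : N ∘L M = ContinuousLinearMap.id ℂ H := by
        ext f; exact hNM f
      set A' := ContinuousLinearMap.adjoint M with hA'
      set N' := ContinuousLinearMap.adjoint N with hN'
      have hAN : A' ∘L N' = ContinuousLinearMap.id ℂ H := by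
        rw [hA', hN', ← ContinuousLinearMap.adjoint_comp, hNMc]
        exact ContinuousLinearMap.adjoint_id
      have hNA : N' ∘L A' = ContinuousLinearMap.id ℂ H := by
        rw [hA', hN', ← ContinuousLinearMap.adjoint_comp, hMNc]
        exact ContinuousLinearMap.adjoint_id
      -- the key pointwise identity
      have key : ∀ (g : H) (n : ℕ), ⟪Ψ n, g⟫ = (m n)⁻¹ * ⟪Φt n, M g⟫ := by
        intro g n₀
        set p : ℕ → ℂ := fun n => (m n)⁻¹ * ⟪Φt n, M g⟫ with hp
        set d : ℕ → ℂ := fun n => ⟪Ψ n, g⟫ - p n with hd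
        set h : H := EΦ.symm (M g) with hh
        have hpn : ∀ n, p n = (m n)⁻¹ * ⟪Φ n, h⟫ := by
          intro n; simp only [hp]; rw [hΦtin n (M g)]
        -- square summability of p
        obtain ⟨AΦ, BΦ, hAΦ, hBΦ, hfrΦ⟩ := id hΦ
        obtain ⟨AΨ, BΨ, hAΨ, hBΨ, hfrΨ⟩ := id hΨ
        have hsq_p : Summable (fun n => ‖p n‖ ^ 2) := by
          have heq : (fun n => ‖p n‖ ^ 2) = fun n => (c^2)⁻¹ * ‖⟪Φ n, h⟫‖ ^ 2 := by
            funext n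
            rw [hpn n, norm_mul, norm_inv, hmod n, mul_pow, inv_pow]
          rw [heq]
          exact (hfrΦ h).1.mul_left _
        -- synthesis of p against Ψ
        obtain ⟨X, hX⟩ : ∃ X, HasSum (fun n => p n • Ψ n) X :=
          ⟨_, (bessel_summable hBΨ.le (fun u => ⟨(hfrΨ u).1, (hfrΨ u).2.2⟩) hsq_p).hasSum⟩
        -- d synthesized against Ψt sums to 0
        have hc_Ψt : HasSum (fun n => ⟪Ψ n, g⟫ • Ψt n) g := hrecΨ g
        have hp_Ψt : HasSum (fun n => p n • Ψt n) g := by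
          have := hN (M g)
          rw [hNM g] at this
          exact this
        have hd_Ψt0 : HasSum (fun n => d n • Ψt n) 0 := by
          have := hc_Ψt.sub hp_Ψt
          rw [sub_self] at this
          exact hasSum_congr' this fun n => by simp only [hd]; rw [sub_smul]
        -- d synthesized against Ψ sums to 0
        have hd_Ψ : HasSum (fun n => d n • Ψ n) (frameOp Ψ g - X) := by
          have := (frame_hasSum hΨ g).sub hX
          exact hasSum_congr' this fun n => by simp only [hd]; rw [sub_smul]
        have hd_Ψt' : HasSum (fun n => d n • Ψt n) (EΨ.symm (frameOp Ψ g - X)) := by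
          have h1 := hd_Ψ.mapL ((EΨ.symm : H ≃L[ℂ] H) : H →L[ℂ] H)
          refine hasSum_congr' h1 fun n => ?_
          simp only [ContinuousLinearEquiv.coe_coe, map_smul]
          rw [← hΨt' n]
        have hzero : frameOp Ψ g - X = 0 := by
          have h1 : EΨ.symm (frameOp Ψ g - X) = 0 := hd_Ψt'.unique hd_Ψt0
          have := congrArg EΨ h1
          rwa [ContinuousLinearEquiv.apply_symm_apply, map_zero] at this
        have hdΨ0 : HasSum (fun n => d n • Ψ n) 0 := by rwa [hzero] at hd_Ψ
        -- d synthesized against mΦ sums to 0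
        have hc_Θ : HasSum (fun n => ⟪Ψ n, g⟫ • (m n • Φ n)) (M g) := by
          refine hasSum_congr' (hM g) fun n => ?_
          rw [smul_smul, mul_comm]
        have hp_Θ : HasSum (fun n => p n • (m n • Φ n)) (M g) := by
          have h1 := frame_hasSum hΦ h
          have h2 : frameOp Φ h = M g := by
            rw [hh, ← hEΦ, ContinuousLinearEquiv.apply_symm_apply]
          rw [h2] at h1
          refine hasSum_congr' h1 fun n => ?_
          rw [smul_smul, hpn n, mul_comm ((m n)⁻¹) _, mul_assoc,
            inv_mul_cancel₀ (hm0 n), mul_one]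
        have hd_Θ0 : HasSum (fun n => d n • (m n • Φ n)) 0 := by
          have := hc_Θ.sub hp_Θ
          rw [sub_self] at this
          exact hasSum_congr' this fun n => by simp only [hd]; rw [sub_smul]
        -- scalar sums
        have hj : HasSum (fun n => d n * (starRingEnd ℂ) ⟪Ψ n, g⟫) 0 := by
          have h1 := hdΨ0.mapL (innerSL ℂ g)
          rw [map_zero] at h1
          refine hasSum_congr' h1 fun n => ?_
          simp only [innerSL_apply_apply]
          rw [inner_smul_right, inner_conj_symm]
        have hk : HasSum (fun n => d n * ((c:ℂ)^2 * (starRingEnd ℂ) (p n))) 0 := by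
          have h1 := hd_Θ0.mapL (innerSL ℂ h)
          rw [map_zero] at h1
          refine hasSum_congr' h1 fun n => ?_
          simp only [innerSL_apply_apply]
          rw [inner_smul_right, inner_smul_right]
          congr 1
          rw [hpn n, map_mul, map_inv₀, inner_conj_symm]
          have hcconj : (starRingEnd ℂ) (m n) ≠ 0 := by
            simpa using hm0 n
          field_simp
          linear_combination (⟪h, Φ n⟫ * hmc n)
        have hk' : HasSum (fun n => d n * (starRingEnd ℂ) (p n)) 0 := by
          have h1 := hk.mul_left (((c:ℂ)^2)⁻¹)
          rw [mul_zero] at h1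
          refine hasSum_congr' h1 fun n => ?_
          rw [mul_left_comm, inv_mul_cancel_left₀ hcC]
        have hl : HasSum (fun n => d n * (starRingEnd ℂ) (d n)) 0 := by
          have := hj.sub hk'
          rw [sub_self] at this
          refine hasSum_congr' this fun n => ?_
          simp only [hd]
          rw [map_sub, mul_sub]
        have hlre : HasSum (fun n => ‖d n‖ ^ 2) 0 := by
          have h1 := hl.mapL Complex.reCLM
          rw [map_zero] at h1
          refine hasSum_congr' h1 fun n => ?_
          simp only [Complex.reCLM_apply]
          rw [RCLike.mul_conj]
          norm_cast
        have hdn0 : d n₀ = 0 := by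
          have h1 : ‖d n₀‖ ^ 2 ≤ 0 := le_hasSum hlre n₀ fun j _ => by positivity
          have h2 : ‖d n₀‖ ^ 2 = 0 := le_antisymm h1 (by positivity)
          have h3 : ‖d n₀‖ = 0 := by nlinarith [norm_nonneg (d n₀)]
          exact norm_eq_zero.1 h3
        have := hdn0
        simp only [hd, sub_eq_zero] at this
        exact this
      -- construct V
      set Vc : H →L[ℂ] H :=
        (((c:ℂ))^2)⁻¹ • (A' ∘L ((EΦ.symm : H ≃L[ℂ] H) : H →L[ℂ] H)) with hVc
      refine ⟨Vc, ?_, ?_⟩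
      · -- bijective
        refine Function.bijective_iff_has_inverse.2
          ⟨fun x => EΦ (N' (((c:ℂ))^2 • x)), ?_, ?_⟩
        · intro x
          simp only [hVc, ContinuousLinearMap.smul_apply, ContinuousLinearMap.comp_apply,
            ContinuousLinearEquiv.coe_coe, map_smul, smul_smul]
          rw [mul_inv_cancel₀ hcC, one_smul]
          have : N' (A' (EΦ.symm x)) = EΦ.symm x := by
            have := congrArg (fun T : H →L[ℂ] H => T (EΦ.symm x)) hNA
            simpa using this
          rw [this, ContinuousLinearEquiv.apply_symm_apply]
        · intro x
          simp only [hVc, ContinuousLinearMap.smul_apply, ContinuousLinearMap.comp_apply,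
            ContinuousLinearEquiv.coe_coe, map_smul, ContinuousLinearEquiv.symm_apply_apply,
            smul_smul]
          rw [mul_inv_cancel₀ hcC, one_smul]
          have := congrArg (fun T : H →L[ℂ] H => T x) hAN
          simpa using this
      · -- V (m n • Φ n) = Ψ n
        intro n
        refine (ext_inner_right ℂ fun v => ?_).symm
        rw [key v n]
        simp only [hVc, ContinuousLinearMap.smul_apply, ContinuousLinearMap.comp_apply,
          ContinuousLinearEquiv.coe_coe, map_smul]
        rw [← hΦt' n]
        rw [inner_smul_left, inner_smul_left]
        rw [hA', ContinuousLinearMap.adjoint_inner_left]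
        rw [map_inv₀, ← Complex.ofReal_pow, Complex.conj_ofReal, Complex.ofReal_pow]
        rw [hminv n, ← mul_assoc]
        ring
    · -- (ii) → (i)
      rintro ⟨V, hVbij, hV⟩
      set EV := ContinuousLinearEquiv.ofBijective V (LinearMap.ker_eq_bot.2 hVbij.1)
        (LinearMap.range_eq_top.2 hVbij.2) with hEV
      have hEVco : ∀ x, EV x = V x := fun x => rfl
      set A' := ContinuousLinearMap.adjoint V with hA'
      set W := ContinuousLinearMap.adjoint ((EV.symm : H ≃L[ℂ] H) : H →L[ℂ] H) with hW
      have hSV : ((EV.symm : H ≃L[ℂ] H) : H →L[ℂ] H) ∘L V = ContinuousLinearMap.id ℂ H := by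
        ext f
        simp only [ContinuousLinearMap.comp_apply, ContinuousLinearEquiv.coe_coe,
          ContinuousLinearMap.id_apply]
        rw [← hEVco, ContinuousLinearEquiv.symm_apply_apply]
      have hVS : V ∘L ((EV.symm : H ≃L[ℂ] H) : H →L[ℂ] H) = ContinuousLinearMap.id ℂ H := by
        ext f
        simp only [ContinuousLinearMap.comp_apply, ContinuousLinearEquiv.coe_coe,
          ContinuousLinearMap.id_apply]
        rw [← hEVco, ContinuousLinearEquiv.apply_symm_apply]
      have hAW : A' ∘L W = ContinuousLinearMap.id ℂ H := by
        rw [hA', hW, ← ContinuousLinearMap.adjoint_comp, hSV]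
        exact ContinuousLinearMap.adjoint_id
      have hWA : W ∘L A' = ContinuousLinearMap.id ℂ H := by
        rw [hA', hW, ← ContinuousLinearMap.adjoint_comp, hVS]
        exact ContinuousLinearMap.adjoint_id
      have hAW' : ∀ x, A' (W x) = x := fun x => by
        have := congrArg (fun T : H →L[ℂ] H => T x) hAW; simpa using this
      have hWA' : ∀ x, W (A' x) = x := fun x => by
        have := congrArg (fun T : H →L[ℂ] H => T x) hWA; simpa using this
      have hΨin : ∀ n (f : H), ⟪Ψ n, f⟫ = (starRingEnd ℂ) (m n) * ⟪Φ n, A' f⟫ := by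
        intro n f
        rw [← hV n, ← ContinuousLinearMap.adjoint_inner_right V (m n • Φ n) f,
          inner_smul_left]
      have hSΨ : ∀ x, frameOp Ψ x = ((c:ℂ)^2) • V (frameOp Φ (A' x)) := by
        intro x
        refine (frame_hasSum hΨ x).unique ?_
        have h1 := ((frame_hasSum hΦ (A' x)).mapL V).const_smul (((c:ℂ))^2)
        refine (hasSum_congr' h1 fun n => ?_)
        rw [map_smul V, smul_smul, hΨin n x, ← hV n, map_smul V, smul_smul]
        congr 1
        first
        | linear_combination ⟪Φ n, A' x⟫ * hmc n
        | linear_combination (-⟪Φ n, A' x⟫) * hmc n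
        | ring
      have hΨtW : ∀ n, Ψt n = ((((c:ℂ))^2)⁻¹ * m n) • W (Φt n) := by
        intro n
        have e1 : frameOp Ψ ((((c:ℂ)^2)⁻¹ * m n) • W (Φt n)) = Ψ n := by
          rw [hSΨ, map_smul A', hAW' (Φt n), ← hEΦ, map_smul, hEΦ, hΦt n,
            map_smul V, smul_smul, ← hV n, map_smul V]
          congr 1
          field_simp
          exact mul_div_cancel_left₀ (m n) (Complex.ofReal_ne_zero.2 hc)
        have e2 : frameOp Ψ (Ψt n) = Ψ n := hΨt n
        have : EΨ (Ψt n) = EΨ ((((c:ℂ)^2)⁻¹ * m n) • W (Φt n)) := by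
          rw [hEΨ, hEΨ, e1, e2]
        exact EΨ.injective this
      refine ⟨(((c:ℂ))^2) • (((EΦ : H ≃L[ℂ] H) : H →L[ℂ] H) ∘L A'),
        ((((c:ℂ))^2)⁻¹) • (W ∘L ((EΦ.symm : H ≃L[ℂ] H) : H →L[ℂ] H)), ?_, ?_, ?_, ?_⟩
      · intro f
        have h1 := (frame_hasSum hΦ (A' f)).const_smul (((c:ℂ))^2)
        have h2 : (((c:ℂ))^2) • frameOp Φ (A' f)
            = ((((c:ℂ))^2) • (((EΦ : H ≃L[ℂ] H) : H →L[ℂ] H) ∘L A')) f := by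
          simp only [ContinuousLinearMap.smul_apply, ContinuousLinearMap.comp_apply,
            ContinuousLinearEquiv.coe_coe]
          rw [hEΦ]
        rw [h2] at h1
        refine hasSum_congr' h1 fun n => ?_
        rw [smul_smul, hΨin n f]
        congr 1
        first
        | linear_combination ⟪Φ n, A' f⟫ * hmc n
        | linear_combination (-⟪Φ n, A' f⟫) * hmc n
        | ring
      · intro f
        simp only [ContinuousLinearMap.smul_apply, ContinuousLinearMap.comp_apply,
          ContinuousLinearEquiv.coe_coe, map_smul, ContinuousLinearEquiv.symm_apply_apply,
          smul_smul]
        first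
        | rw [mul_inv_cancel₀ hcC, one_smul]
        | rw [inv_mul_cancel₀ hcC, one_smul]
        exact hWA' _
      · intro f
        simp only [ContinuousLinearMap.smul_apply, ContinuousLinearMap.comp_apply,
          ContinuousLinearEquiv.coe_coe, map_smul, smul_smul]
        first
        | rw [mul_inv_cancel₀ hcC, one_smul]
        | rw [inv_mul_cancel₀ hcC, one_smul]
        rw [hAW' _, ContinuousLinearEquiv.apply_symm_apply]
      · intro f
        have h1 := ((hrecΦtt f).mapL W).const_smul ((((c:ℂ))^2)⁻¹)
        have h2 : ((((c:ℂ))^2)⁻¹) • W (EΦ.symm f)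
            = (((((c:ℂ))^2)⁻¹) • (W ∘L ((EΦ.symm : H ≃L[ℂ] H) : H →L[ℂ] H))) f := by
          simp only [ContinuousLinearMap.smul_apply, ContinuousLinearMap.comp_apply,
            ContinuousLinearEquiv.coe_coe]
        rw [h2] at h1
        refine hasSum_congr' h1 fun n => ?_
        rw [map_smul W, smul_smul, hΨtW n, smul_smul]
        congr 1
        field_simp [hm0 n]
  · -- (ii) ↔ (iii)
    constructor
    · rintro ⟨V, hVbij, hV⟩
      set EV := ContinuousLinearEquiv.ofBijective V (LinearMap.ker_eq_bot.2 hVbij.1)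
        (LinearMap.range_eq_top.2 hVbij.2) with hEV
      have hEVco : ∀ x, EV x = V x := fun x => rfl
      refine ⟨(((c:ℂ))^2)⁻¹ • ((EV.symm : H ≃L[ℂ] H) : H →L[ℂ] H), ?_, ?_⟩
      · refine Function.bijective_iff_has_inverse.2 ⟨fun x => V ((((c:ℂ))^2) • x), ?_, ?_⟩
        · intro x
          simp only [ContinuousLinearMap.smul_apply, ContinuousLinearEquiv.coe_coe,
            map_smul, smul_smul, ← hEVco, ContinuousLinearEquiv.apply_symm_apply,
            ContinuousLinearEquiv.symm_apply_apply]
          first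
          | rw [mul_inv_cancel₀ hcC, one_smul]
          | rw [inv_mul_cancel₀ hcC, one_smul]
        · intro x
          simp only [ContinuousLinearMap.smul_apply, ContinuousLinearEquiv.coe_coe,
            map_smul, smul_smul, ← hEVco, ContinuousLinearEquiv.apply_symm_apply,
            ContinuousLinearEquiv.symm_apply_apply]
          first
          | rw [mul_inv_cancel₀ hcC, one_smul]
          | rw [inv_mul_cancel₀ hcC, one_smul]
      · intro n
        simp only [ContinuousLinearMap.smul_apply, ContinuousLinearEquiv.coe_coe, map_smul]
        have h1 : EV.symm (Ψ n) = m n • Φ n := by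
          rw [← hV n, ← hEVco, ContinuousLinearEquiv.symm_apply_apply]
        rw [h1, smul_smul, smul_smul]
        convert one_smul ℂ (Φ n) using 2
        field_simp [Complex.ofReal_ne_zero.2 hc]
        first
        | linear_combination hmc n
        | linear_combination -hmc n
        | ring
    · rintro ⟨V, hVbij, hV⟩
      set EV := ContinuousLinearEquiv.ofBijective V (LinearMap.ker_eq_bot.2 hVbij.1)
        (LinearMap.range_eq_top.2 hVbij.2) with hEV
      have hEVco : ∀ x, EV x = V x := fun x => rfl
      refine ⟨(((c:ℂ))^2)⁻¹ • ((EV.symm : H ≃L[ℂ] H) : H →L[ℂ] H), ?_, ?_⟩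
      · refine Function.bijective_iff_has_inverse.2 ⟨fun x => V ((((c:ℂ))^2) • x), ?_, ?_⟩
        · intro x
          simp only [ContinuousLinearMap.smul_apply, ContinuousLinearEquiv.coe_coe,
            map_smul, smul_smul, ← hEVco, ContinuousLinearEquiv.apply_symm_apply,
            ContinuousLinearEquiv.symm_apply_apply]
          first
          | rw [mul_inv_cancel₀ hcC, one_smul]
          | rw [inv_mul_cancel₀ hcC, one_smul]
        · intro x
          simp only [ContinuousLinearMap.smul_apply, ContinuousLinearEquiv.coe_coe,
            map_smul, smul_smul, ← hEVco, ContinuousLinearEquiv.apply_symm_apply,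
            ContinuousLinearEquiv.symm_apply_apply]
          first
          | rw [mul_inv_cancel₀ hcC, one_smul]
          | rw [inv_mul_cancel₀ hcC, one_smul]
      · intro n
        simp only [ContinuousLinearMap.smul_apply, ContinuousLinearEquiv.coe_coe, map_smul]
        have h1 : EV.symm (Φ n) = (starRingEnd ℂ) (m n) • Ψ n := by
          rw [← hV n, ← hEVco, ContinuousLinearEquiv.symm_apply_apply]
        rw [h1, smul_smul, smul_smul]
        convert one_smul ℂ (Ψ n) using 2
        field_simp [Complex.ofReal_ne_zero.2 hc]
        first
        | linear_combination hmc n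
        | linear_combination -hmc n
        | ring
end

section
/- Let Φ and Ψ be Riesz bases for H and m a semi-normalized symbol. Then M_{m,Φ,Ψ} is invertible and M_{m,Φ,Ψ}^{-1} = M_{1/m, Ψ̃, Φ̃}, where Φ̃ and Ψ̃ are the canonical (biorthogonal) dual bases. -/
open scoped ComplexConjugate ComplexInnerProductSpace ENNReal

variable {H : Type*} [NormedAddCommGroup H] [InnerProductSpace ℂ H] [CompleteSpace H]

/-- `Φ` is a Riesz basis for `H`: the image of an orthonormal basis under a
bounded bijective operator. -/
def IsRieszBasis (Φ : ℕ → H) : Prop :=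
  ∃ (e : HilbertBasis ℕ ℂ H) (V : H →L[ℂ] H), Function.Bijective V ∧ ∀ n, V (e n) = Φ n


noncomputable section

private lemma mult_mem (m : ℕ → ℂ) (b : ℝ) (hb : ∀ n, ‖m n‖ ≤ b)
    (g : lp (fun _ : ℕ => ℂ) 2) : Memℓp (fun n => m n * g n) 2 := by
  have hb0 : 0 ≤ b := (norm_nonneg (m 0)).trans (hb 0)
  apply memℓp_gen
  have hg : Summable fun n => ‖g n‖ ^ (2 : ℝ≥0∞).toReal :=
    (lp.memℓp g).summable (by norm_num)
  refine Summable.of_nonneg_of_le (fun n => ?_) (fun n => ?_) (hg.mul_left (b ^ (2:ℝ)))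
  · positivity
  · have : ‖m n * g n‖ ^ (2 : ℝ≥0∞).toReal ≤ (b * ‖g n‖) ^ (2 : ℝ≥0∞).toReal := by
      apply Real.rpow_le_rpow (norm_nonneg _) _ (by norm_num)
      rw [norm_mul]
      exact mul_le_mul_of_nonneg_right (hb n) (norm_nonneg _)
    calc ‖m n * g n‖ ^ (2 : ℝ≥0∞).toReal ≤ (b * ‖g n‖) ^ (2 : ℝ≥0∞).toReal := this
    _ = b ^ (2:ℝ) * ‖g n‖ ^ (2 : ℝ≥0∞).toReal := by
        simp [Real.mul_rpow hb0 (norm_nonneg _), mul_pow]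

/-- pointwise multiplication operator on ℓ². -/
def multL (m : ℕ → ℂ) (b : ℝ) (hb : ∀ n, ‖m n‖ ≤ b) :
    lp (fun _ : ℕ => ℂ) 2 →L[ℂ] lp (fun _ : ℕ => ℂ) 2 :=
  LinearMap.mkContinuous
    { toFun := fun g => ⟨fun n => m n * g n, mult_mem m b hb g⟩
      map_add' := fun g h => by
        apply lp.ext; funext n
        simp [mul_add]; rfl
      map_smul' := fun c g => by
        apply lp.ext; funext n
        simp [lp.coeFn_smul]
        ring }
    b
    (by
      intro g
      have hb0 : 0 ≤ b := (norm_nonneg (m 0)).trans (hb 0)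
      refine lp.norm_le_of_tsum_le (by norm_num) (by positivity) ?_
      have hg : Summable fun n => ‖g n‖ ^ (2 : ℝ≥0∞).toReal :=
        (lp.memℓp g).summable (by norm_num)
      have h1 : ∀ n, ‖(⟨fun n => m n * g n, mult_mem m b hb g⟩ : lp (fun _ : ℕ => ℂ) 2) n‖
          ^ (2 : ℝ≥0∞).toReal ≤ b ^ (2:ℝ) * ‖g n‖ ^ (2 : ℝ≥0∞).toReal := by
        intro n
        have h2 : ‖m n * g n‖ ^ (2 : ℝ≥0∞).toReal ≤ (b * ‖g n‖) ^ (2 : ℝ≥0∞).toReal := by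
          apply Real.rpow_le_rpow (norm_nonneg _) _ (by norm_num)
          rw [norm_mul]
          exact mul_le_mul_of_nonneg_right (hb n) (norm_nonneg _)
        calc ‖m n * g n‖ ^ (2 : ℝ≥0∞).toReal ≤ (b * ‖g n‖) ^ (2 : ℝ≥0∞).toReal := h2
        _ = b ^ (2:ℝ) * ‖g n‖ ^ (2 : ℝ≥0∞).toReal := by
            simp [Real.mul_rpow hb0 (norm_nonneg _), mul_pow]
      have hsum : Summable fun n =>
          ‖(⟨fun n => m n * g n, mult_mem m b hb g⟩ : lp (fun _ : ℕ => ℂ) 2) n‖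
            ^ (2 : ℝ≥0∞).toReal :=
        (lp.memℓp _).summable (by norm_num)
      calc ∑' n, ‖(⟨fun n => m n * g n, mult_mem m b hb g⟩ : lp (fun _ : ℕ => ℂ) 2) n‖
            ^ (2 : ℝ≥0∞).toReal
          ≤ ∑' n, b ^ (2:ℝ) * ‖g n‖ ^ (2 : ℝ≥0∞).toReal :=
            Summable.tsum_le_tsum h1 hsum (hg.mul_left _)
        _ = b ^ (2:ℝ) * ∑' n, ‖g n‖ ^ (2 : ℝ≥0∞).toReal := tsum_mul_left
        _ = b ^ (2:ℝ) * ‖g‖ ^ (2 : ℝ≥0∞).toReal := by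
            rw [lp.norm_rpow_eq_tsum (by norm_num) g]
        _ = (b * ‖g‖) ^ (2 : ℝ≥0∞).toReal := by
            simp [Real.mul_rpow hb0 (norm_nonneg _), mul_pow])

lemma multL_apply (m : ℕ → ℂ) (b : ℝ) (hb : ∀ n, ‖m n‖ ≤ b)
    (g : lp (fun _ : ℕ => ℂ) 2) (n : ℕ) : multL m b hb g n = m n * g n := rfl

end

set_option maxHeartbeats 2000000 in
open ContinuousLinearMap in
theorem stmt19 (Φ Ψ Φt Ψt : ℕ → H) (m : ℕ → ℂ)
    (hΦ : IsRieszBasis Φ) (hΨ : IsRieszBasis Ψ) (hm : SemiNormalized m)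
    (hΦt : ∀ n, frameOp Φ (Φt n) = Φ n) (hΨt : ∀ n, frameOp Ψ (Ψt n) = Ψ n) :
    ∃ M N : H →L[ℂ] H,
      (∀ f : H, HasSum (fun n => (m n * ⟪Ψ n, f⟫) • Φ n) (M f)) ∧
      (∀ f : H, N (M f) = f) ∧ (∀ f : H, M (N f) = f) ∧
      ∀ f : H, HasSum (fun n => ((m n)⁻¹ * ⟪Φt n, f⟫) • Ψt n) (N f) := by

  classical
  obtain ⟨e, V, hVbij, hVe⟩ := hΦ
  obtain ⟨e', W, hWbij, hWe⟩ := hΨ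
  obtain ⟨a, b, ha, hab⟩ := hm
  have hm0 : ∀ n, m n ≠ 0 := by
    intro n h
    have := (hab n).1
    rw [h, norm_zero] at this
    linarith
  have hminv : ∀ n, ‖(m n)⁻¹‖ ≤ a⁻¹ := fun n => by
    rw [norm_inv]; exact inv_anti₀ ha (hab n).1
  set Ve := ContinuousLinearEquiv.ofBijective V
    (LinearMap.ker_eq_bot.mpr hVbij.1) (LinearMap.range_eq_top.mpr hVbij.2) with hVedef
  set We := ContinuousLinearEquiv.ofBijective W
    (LinearMap.ker_eq_bot.mpr hWbij.1) (LinearMap.range_eq_top.mpr hWbij.2) with hWedef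
  have hVec : ∀ x, Ve x = V x := fun x => by
    rw [hVedef, ContinuousLinearEquiv.coeFn_ofBijective]
  have hWec : ∀ x, We x = W x := fun x => by
    rw [hWedef, ContinuousLinearEquiv.coeFn_ofBijective]
  set Vinv : H →L[ℂ] H := (Ve.symm : H →L[ℂ] H) with hVinvdef
  set Winv : H →L[ℂ] H := (We.symm : H →L[ℂ] H) with hWinvdef
  have hVV : ∀ x, Vinv (V x) = x := fun x => by
    rw [hVinvdef, ← hVec]; exact Ve.symm_apply_apply x
  have hVV' : ∀ x, V (Vinv x) = x := fun x => by
    rw [hVinvdef, ← hVec]; exact Ve.apply_symm_apply x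
  have hWW : ∀ x, Winv (W x) = x := fun x => by
    rw [hWinvdef, ← hWec]; exact We.symm_apply_apply x
  have hWW' : ∀ x, W (Winv x) = x := fun x => by
    rw [hWinvdef, ← hWec]; exact We.apply_symm_apply x
  set Wad := ContinuousLinearMap.adjoint W with hWaddef
  set Vad := ContinuousLinearMap.adjoint V with hVaddef
  set Winvad := ContinuousLinearMap.adjoint Winv with hWinvaddef
  have hWad1 : ∀ x, Winvad (Wad x) = x := fun x => by
    have hcomp : W ∘L Winv = ContinuousLinearMap.id ℂ H :=
      ContinuousLinearMap.ext fun y => hWW' y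
    calc Winvad (Wad x) = ContinuousLinearMap.adjoint (W ∘L Winv) x := by
          rw [ContinuousLinearMap.adjoint_comp]; rfl
      _ = x := by rw [hcomp, ContinuousLinearMap.adjoint_id]; rfl
  have hWad2 : ∀ x, Wad (Winvad x) = x := fun x => by
    have hcomp : Winv ∘L W = ContinuousLinearMap.id ℂ H :=
      ContinuousLinearMap.ext fun y => hWW y
    calc Wad (Winvad x) = ContinuousLinearMap.adjoint (Winv ∘L W) x := by
          rw [ContinuousLinearMap.adjoint_comp]; rfl
      _ = x := by rw [hcomp, ContinuousLinearMap.adjoint_id]; rfl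
  -- frame operators
  have hSΦ : ∀ g, frameOp Φ g = V (Vad g) := by
    intro g
    have h1 : HasSum (fun n => ⟪e n, Vad g⟫ • e n) (Vad g) := by
      simpa [e.repr_apply_apply] using e.hasSum_repr (Vad g)
    have h2 : HasSum (fun n => ⟪Φ n, g⟫ • Φ n) (V (Vad g)) := by
      simpa [map_smul, hVaddef, ContinuousLinearMap.adjoint_inner_right, hVe] using h1.mapL V
    exact h2.tsum_eq
  have hSΨ : ∀ g, frameOp Ψ g = W (Wad g) := by
    intro g
    have h1 : HasSum (fun n => ⟪e' n, Wad g⟫ • e' n) (Wad g) := by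
      simpa [e'.repr_apply_apply] using e'.hasSum_repr (Wad g)
    have h2 : HasSum (fun n => ⟪Ψ n, g⟫ • Ψ n) (W (Wad g)) := by
      simpa [map_smul, hWaddef, ContinuousLinearMap.adjoint_inner_right, hWe] using h1.mapL W
    exact h2.tsum_eq
  have hVadΦt : ∀ n, Vad (Φt n) = e n := by
    intro n
    apply hVbij.1
    rw [← hSΦ, hΦt, ← hVe]
  have hWadΨt : ∀ n, Wad (Ψt n) = e' n := by
    intro n
    apply hWbij.1
    rw [← hSΨ, hΨt, ← hWe]
  have hΦtf : ∀ n (f : H), ⟪Φt n, f⟫ = ⟪e n, Vinv f⟫ := by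
    intro n f
    calc ⟪Φt n, f⟫ = ⟪Φt n, V (Vinv f)⟫ := by rw [hVV']
      _ = ⟪Vad (Φt n), Vinv f⟫ := (ContinuousLinearMap.adjoint_inner_left V (Vinv f) (Φt n)).symm
      _ = ⟪e n, Vinv f⟫ := by rw [hVadΦt]
  have hΨtinv : ∀ n, Ψt n = Winvad (e' n) := by
    intro n
    rw [← hWadΨt n, hWad1]
  -- the ℓ² pieces
  set Fc : H →L[ℂ] lp (fun _ : ℕ => ℂ) 2 :=
    (e.repr.toContinuousLinearEquiv : H →L[ℂ] lp (fun _ : ℕ => ℂ) 2) with hFcdef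
  set Fs : lp (fun _ : ℕ => ℂ) 2 →L[ℂ] H :=
    (e.repr.symm.toContinuousLinearEquiv : lp (fun _ : ℕ => ℂ) 2 →L[ℂ] H) with hFsdef
  set Gc : H →L[ℂ] lp (fun _ : ℕ => ℂ) 2 :=
    (e'.repr.toContinuousLinearEquiv : H →L[ℂ] lp (fun _ : ℕ => ℂ) 2) with hGcdef
  set Gs : lp (fun _ : ℕ => ℂ) 2 →L[ℂ] H :=
    (e'.repr.symm.toContinuousLinearEquiv : lp (fun _ : ℕ => ℂ) 2 →L[ℂ] H) with hGsdef
  have hFcx : ∀ x, Fc x = e.repr x := fun _ => rfl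
  have hFsx : ∀ x, Fs x = e.repr.symm x := fun _ => rfl
  have hGcx : ∀ x, Gc x = e'.repr x := fun _ => rfl
  have hGsx : ∀ x, Gs x = e'.repr.symm x := fun _ => rfl
  set D := multL m b (fun n => (hab n).2) with hDdef
  set Dinv := multL (fun n => (m n)⁻¹) a⁻¹ hminv with hDinvdef
  have hDD : ∀ g, Dinv (D g) = g := by
    intro g
    apply lp.ext; funext n
    show (m n)⁻¹ * (m n * g n) = g n
    rw [← mul_assoc, inv_mul_cancel₀ (hm0 n), one_mul]
  have hDD' : ∀ g, D (Dinv g) = g := by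
    intro g
    apply lp.ext; funext n
    show m n * ((m n)⁻¹ * g n) = g n
    rw [← mul_assoc, mul_inv_cancel₀ (hm0 n), one_mul]
  refine ⟨V ∘L Fs ∘L D ∘L Gc ∘L Wad, Winvad ∘L Gs ∘L Dinv ∘L Fc ∘L Vinv, ?_, ?_, ?_, ?_⟩
  · intro f
    set c := D (Gc (Wad f)) with hcdef
    have hc : ∀ n, c n = m n * ⟪Ψ n, f⟫ := by
      intro n
      rw [hcdef, hDdef, multL_apply]
      congr 1
      rw [hGcx, e'.repr_apply_apply, hWaddef, ContinuousLinearMap.adjoint_inner_right, hWe]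
    have hs := (e.hasSum_repr_symm c).mapL V
    have heq : (fun n => (m n * ⟪Ψ n, f⟫) • Φ n) = fun n => V (c n • e n) := by
      funext n
      rw [map_smul, hVe, hc]
    rw [heq]
    show HasSum _ (V (Fs c))
    rw [hFsx]
    exact hs
  · intro f
    show Winvad (Gs (Dinv (Fc (Vinv (V (Fs (D (Gc (Wad f))))))))) = f
    rw [hVV]
    rw [show Fc (Fs (D (Gc (Wad f)))) = D (Gc (Wad f)) from by
      rw [hFcx, hFsx]; exact e.repr.apply_symm_apply _]
    rw [hDD]
    rw [show Gs (Gc (Wad f)) = Wad f from by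
      rw [hGcx, hGsx]; exact e'.repr.symm_apply_apply _]
    exact hWad1 f
  · intro f
    show V (Fs (D (Gc (Wad (Winvad (Gs (Dinv (Fc (Vinv f))))))))) = f
    rw [hWad2]
    rw [show Gc (Gs (Dinv (Fc (Vinv f)))) = Dinv (Fc (Vinv f)) from by
      rw [hGcx, hGsx]; exact e'.repr.apply_symm_apply _]
    rw [hDD']
    rw [show Fs (Fc (Vinv f)) = Vinv f from by
      rw [hFcx, hFsx]; exact e.repr.symm_apply_apply _]
    exact hVV' f
  · intro f
    set c := Dinv (Fc (Vinv f)) with hcdef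
    have hc : ∀ n, c n = (m n)⁻¹ * ⟪Φt n, f⟫ := by
      intro n
      rw [hcdef, hDinvdef, multL_apply]
      congr 1
      rw [hFcx, e.repr_apply_apply, ← hΦtf]
    have hs := (e'.hasSum_repr_symm c).mapL Winvad
    have heq : (fun n => ((m n)⁻¹ * ⟪Φt n, f⟫) • Ψt n) = fun n => Winvad (c n • e' n) := by
      funext n
      rw [map_smul, hc, hΨtinv]
    rw [heq]
    show HasSum _ (Winvad (Gs c))
    rw [hGsx]
    exact hs
end
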